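/- With r-bit quantized phases, for any h ∈ ℂ^N the quantized phase-aligned beamformer w with w_n = (1/√N) e^{jφ_n}, where φ_n is the Φ_r-quantization of arg(h_n), satisfies |w^H h| ≥ cos(π/2^r) · (1/√N) Σ_n |h_n|; i.e., quantized beamforming achieves at least a fraction cos(π/2^r) of the optimal analog beamforming amplitude. -/

import Mathlib

open scoped BigOperators ComplexConjugate

/-- With `r`-bit quantized phases `φ n ∈ Φ_r` chosen within angular distance `π/2^r`
of `arg (h n)`, the quantized beamformer `w n = (1/√N) e^{jφ n}` satisfies
`|wᴴ h| ≥ cos(π/2^r) · (1/√N) ∑ |h n|`. -/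
theorem quantized_beamforming_bound (r N : ℕ) (hr : 1 ≤ r) (h : Fin N → ℂ)
    (φ : Fin N → ℝ)
    (hφmem : ∀ n, ∃ k : ℕ, k < 2 ^ r ∧ φ n = 2 * Real.pi * k / 2 ^ r)
    (hφclose : ∀ n, ∃ m : ℤ,
      |(h n).arg - φ n - 2 * Real.pi * m| ≤ Real.pi / 2 ^ r) :
    ‖∑ n, conj ((((1 : ℝ) / Real.sqrt N : ℝ) : ℂ)
        * Complex.exp (Complex.I * (φ n : ℂ))) * h n‖
      ≥ Real.cos (Real.pi / 2 ^ r) * ((1 / Real.sqrt N) * ∑ n, ‖h n‖) := by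
  set c : ℝ := 1 / Real.sqrt N with hc
  have hcpos : 0 ≤ c := by positivity
  have hre : ∀ n : Fin N,
      (conj (((c : ℝ) : ℂ) * Complex.exp (Complex.I * (φ n : ℂ))) * h n).re
        = c * (‖h n‖ * Real.cos ((h n).arg - φ n)) := by
    intro n
    have hh : h n = (‖h n‖ : ℂ) * Complex.exp ((h n).arg * Complex.I) :=
      (Complex.norm_mul_exp_arg_mul_I (h n)).symm
    rw [map_mul, Complex.conj_ofReal, ← Complex.exp_conj]
    have hconj : conj (Complex.I * (φ n : ℂ)) = ((-φ n : ℝ) : ℂ) * Complex.I := by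
      simp [Complex.conj_I, mul_comm]
    rw [hconj]
    conv_lhs => rw [hh]
    have hexp : Complex.exp (((-φ n : ℝ) : ℂ) * Complex.I)
          * Complex.exp ((h n).arg * Complex.I)
        = Complex.exp ((((h n).arg - φ n : ℝ) : ℂ) * Complex.I) := by
      rw [← Complex.exp_add]; push_cast; ring_nf
    rw [show ((c : ℝ) : ℂ) * Complex.exp (((-φ n : ℝ) : ℂ) * Complex.I)
          * ((‖h n‖ : ℂ) * Complex.exp ((h n).arg * Complex.I))
        = ((c : ℝ) : ℂ) * (‖h n‖ : ℂ)
            * (Complex.exp (((-φ n : ℝ) : ℂ) * Complex.I)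
              * Complex.exp ((h n).arg * Complex.I)) by ring, hexp]
    rw [show ((c : ℝ) : ℂ) * (‖h n‖ : ℂ) = (((c * ‖h n‖) : ℝ) : ℂ)
        by push_cast; ring]
    rw [Complex.re_ofReal_mul, Complex.exp_ofReal_mul_I_re]
    ring
  have hcosb : ∀ n : Fin N, Real.cos (Real.pi / 2 ^ r) ≤ Real.cos ((h n).arg - φ n) := by
    intro n
    obtain ⟨m, hm⟩ := hφclose n
    have hcos_eq : Real.cos ((h n).arg - φ n) = Real.cos ((h n).arg - φ n - 2 * Real.pi * m) := by
      rw [show (h n).arg - φ n - 2 * Real.pi * m = (h n).arg - φ n - m * (2 * Real.pi) by ring,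
        Real.cos_sub_int_mul_two_pi]
    rw [hcos_eq, ← Real.cos_abs ((h n).arg - φ n - 2 * Real.pi * m)]
    apply Real.cos_le_cos_of_nonneg_of_le_pi (abs_nonneg _) _ hm
    exact div_le_self Real.pi_pos.le (one_le_pow₀ (by norm_num))
  calc Real.cos (Real.pi / 2 ^ r) * (c * ∑ n, ‖h n‖)
      = ∑ n, c * (‖h n‖ * Real.cos (Real.pi / 2 ^ r)) := by
        rw [Finset.mul_sum, Finset.mul_sum]; congr 1; ext n; ring
    _ ≤ ∑ n, c * (‖h n‖ * Real.cos ((h n).arg - φ n)) := by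
        apply Finset.sum_le_sum
        intro n _
        have habs : (0:ℝ) ≤ ‖h n‖ := norm_nonneg _
        exact mul_le_mul_of_nonneg_left (mul_le_mul_of_nonneg_left (hcosb n) habs) hcpos
    _ = (∑ n, conj (((c : ℝ) : ℂ) * Complex.exp (Complex.I * (φ n : ℂ))) * h n).re := by
        rw [Complex.re_sum]; exact Finset.sum_congr rfl fun n _ => (hre n).symm
    _ ≤ ‖∑ n, conj (((c : ℝ) : ℂ) * Complex.exp (Complex.I * (φ n : ℂ))) * h n‖ :=
        Complex.re_le_norm _
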